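/- If a planar analytic vector field (P, Q) satisfies P(x, -y) = -P(x, y) and Q(x, -y) = Q(x, y) for all (x, y), and the origin is an equilibrium whose linearization has purely imaginary nonzero eigenvalues, then the origin is a center: there exists a punctured neighborhood of the origin entirely filled with periodic orbits. -/

import Mathlib

set_option maxHeartbeats 2000000

open Real Set

/-- unit direction -/
noncomputable def uu (θ : ℝ) : ℝ × ℝ := (Real.cos θ, Real.sin θ)

lemma uu_norm_le (θ : ℝ) : ‖uu θ‖ ≤ 1 := by
  rw [uu, Prod.norm_def]
  simp [Real.norm_eq_abs, abs_cos_le_one, abs_sin_le_one]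

lemma uu_ne_zero (θ : ℝ) : uu θ ≠ 0 := by
  intro h
  have h1 : Real.cos θ = 0 := congrArg Prod.fst h
  have h2 : Real.sin θ = 0 := congrArg Prod.snd h
  have := sin_sq_add_cos_sq θ
  rw [h1, h2] at this; norm_num at this

lemma sin_lipschitz : LipschitzWith 1 Real.sin := by
    apply lipschitzWith_of_nnnorm_deriv_le Real.differentiable_sin
    intro x
    rw [Real.deriv_sin]
    simpa [← NNReal.coe_le_coe, Real.norm_eq_abs] using abs_cos_le_one x

lemma cos_lipschitz : LipschitzWith 1 Real.cos := by
    apply lipschitzWith_of_nnnorm_deriv_le Real.differentiable_cos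
    intro x
    rw [Real.deriv_cos']
    simpa [← NNReal.coe_le_coe, Real.norm_eq_abs] using abs_sin_le_one x

lemma cos_lip (θ θ' : ℝ) : |Real.cos θ - Real.cos θ'| ≤ |θ - θ'| := by
  have h1 := cos_lipschitz.dist_le_mul θ θ'
  rw [Real.dist_eq, Real.dist_eq] at h1
  simpa using h1

lemma sin_lip (θ θ' : ℝ) : |Real.sin θ - Real.sin θ'| ≤ |θ - θ'| := by
  have h1 := sin_lipschitz.dist_le_mul θ θ'
  rw [Real.dist_eq, Real.dist_eq] at h1
  simpa using h1

lemma uu_dist_le (θ θ' : ℝ) : ‖uu θ - uu θ'‖ ≤ |θ - θ'| := by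
  rw [uu, uu, Prod.norm_def]
  simp only [Prod.fst_sub, Prod.snd_sub]
  exact max_le (by simpa [Real.norm_eq_abs] using cos_lip θ θ')
    (by simpa [Real.norm_eq_abs] using sin_lip θ θ')

lemma uu_continuous : Continuous uu :=
  Real.continuous_cos.prodMk Real.continuous_sin

lemma uu_periodic : Function.Periodic uu (2 * π) := by
  intro θ; rw [uu, uu]; simp [Real.cos_add_two_pi, Real.sin_add_two_pi]

lemma uu_neg (θ : ℝ) : uu (-θ) = ((uu θ).1, -(uu θ).2) := by
  rw [uu, uu]; simp

lemma uu_hasDerivAt (θ : ℝ) : HasDerivAt uu (-Real.sin θ, Real.cos θ) θ :=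
  (Real.hasDerivAt_cos θ).prodMk (Real.hasDerivAt_sin θ)


/-- Global uniqueness for a globally Lipschitz (in space) ODE. -/
theorem glue_unique {v : ℝ → ℝ → ℝ} {K : NNReal} (hl : ∀ t, LipschitzWith K (v t))
    {α β : ℝ → ℝ} (hα : ∀ t, HasDerivAt α (v t (α t)) t)
    (hβ : ∀ t, HasDerivAt β (v t (β t)) t)
    {t₀ : ℝ} (h0 : α t₀ = β t₀) : ∀ t, α t = β t := by
  intro t
  have hv : ∀ s, LipschitzOnWith K (v s) ((fun _ => (univ : Set ℝ)) s) :=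
    fun s => (hl s).lipschitzOnWith
  have hmem : t₀ ∈ Ioo (min t t₀ - 1) (max t t₀ + 1) :=
    ⟨by have := min_le_right t t₀; linarith, by have := le_max_right t t₀; linarith⟩
  have := ODE_solution_unique_of_mem_Icc (v := v) (s := fun _ => univ) (fun s _ => hv s) hmem
    (fun s _ => (hα s).continuousAt.continuousWithinAt)
    (fun s _ => hα s) (fun _ _ => mem_univ _)
    (fun s _ => (hβ s).continuousAt.continuousWithinAt)
    (fun s _ => hβ s) (fun _ _ => mem_univ _) h0
  exact this ⟨by have := min_le_left t t₀; linarith, by have := le_max_left t t₀; linarith⟩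

/-- Global existence for a bounded, globally Lipschitz, time-continuous ODE on ℝ. -/
theorem glue_exists {v : ℝ → ℝ → ℝ} {K : NNReal} {C : ℝ} (hC : 0 ≤ C)
    (hl : ∀ t, LipschitzWith K (v t))
    (hc : ∀ x, Continuous fun t => v t x)
    (hb : ∀ t x, |v t x| ≤ C) (t₀ x₀ : ℝ) :
    ∃ α : ℝ → ℝ, α t₀ = x₀ ∧ ∀ t, HasDerivAt α (v t (α t)) t := by
  have hex : ∀ n : ℕ, ∃ f : ℝ → ℝ, f t₀ = x₀ ∧
      ∀ t ∈ Ioo (t₀ - (n + 1 : ℝ)) (t₀ + (n + 1 : ℝ)), HasDerivAt f (v t (f t)) t := by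
    intro n
    have h1 : (0:ℝ) < (n:ℝ) + 1 := by positivity
    have hpl : IsPicardLindelof v (tmin := t₀ - (n + 1 : ℝ)) (tmax := t₀ + (n + 1 : ℝ))
        ⟨t₀, by constructor <;> linarith⟩ x₀ (Real.toNNReal (C * ((n : ℝ) + 1))) 0
        (Real.toNNReal C) K := by
      constructor
      · exact fun t _ => (hl t).lipschitzOnWith
      · exact fun x _ => (hc x).continuousOn
      · intro t _ x _; simpa [Real.norm_eq_abs, Real.coe_toNNReal _ hC] using hb t x
      · simp only [NNReal.coe_zero, sub_zero, Real.coe_toNNReal _ hC,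
          Real.coe_toNNReal _ (by positivity : (0:ℝ) ≤ C * ((n : ℝ) + 1))]
        have h2 : max ((t₀ + ((n:ℝ) + 1)) - t₀) (t₀ - (t₀ - ((n:ℝ) + 1))) = (n:ℝ) + 1 := by
          rw [show (t₀ + ((n:ℝ)+1)) - t₀ = (n:ℝ)+1 by ring,
            show t₀ - (t₀ - ((n:ℝ)+1)) = (n:ℝ)+1 by ring, max_self]
        rw [h2]
    obtain ⟨f, hf0, hf⟩ := hpl.exists_eq_forall_mem_Icc_hasDerivWithinAt₀
    refine ⟨f, hf0, fun t ht => ?_⟩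
    exact (hf t (Ioo_subset_Icc_self ht)).hasDerivAt (Icc_mem_nhds ht.1 ht.2)
  choose f hf0 hf using hex
  -- agreement
  have hagree : ∀ m n : ℕ, ∀ t, t ∈ Ioo (t₀ - (m + 1 : ℝ)) (t₀ + (m + 1 : ℝ)) →
      t ∈ Ioo (t₀ - (n + 1 : ℝ)) (t₀ + (n + 1 : ℝ)) → f m t = f n t := by
    have key : ∀ m n : ℕ, m ≤ n → ∀ t, t ∈ Ioo (t₀ - (m + 1 : ℝ)) (t₀ + (m + 1 : ℝ)) →
        f m t = f n t := by
      intro m n hmn t ht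
      have hsub : Ioo (t₀ - (m + 1 : ℝ)) (t₀ + (m + 1 : ℝ)) ⊆
          Ioo (t₀ - (n + 1 : ℝ)) (t₀ + (n + 1 : ℝ)) := by
        apply Ioo_subset_Ioo <;> · have : (m:ℝ) ≤ (n:ℝ) := Nat.cast_le.mpr hmn; linarith
      have hv : ∀ s, LipschitzOnWith K (v s) ((fun _ => (univ : Set ℝ)) s) :=
        fun s => (hl s).lipschitzOnWith
      have ht₀ : t₀ ∈ Ioo (t₀ - (m + 1 : ℝ)) (t₀ + (m + 1 : ℝ)) := by
        have h1 : (0:ℝ) < (m:ℝ) + 1 := by positivity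
        constructor <;> linarith
      exact ODE_solution_unique_of_mem_Ioo (fun s _ => hv s) ht₀
        (fun s hs => ⟨hf m s hs, mem_univ _⟩)
        (fun s hs => ⟨hf n s (hsub hs), mem_univ _⟩)
        ((hf0 m).trans (hf0 n).symm) ht
    intro m n t htm htn
    rcases le_total m n with h | h
    · exact key m n h t htm
    · exact (key n m h t htn).symm
  set N : ℝ → ℕ := fun t => ⌈|t - t₀|⌉₊ with hN
  have hmem : ∀ t : ℝ, t ∈ Ioo (t₀ - (N t + 1 : ℝ)) (t₀ + (N t + 1 : ℝ)) := by
    intro t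
    have h1 : |t - t₀| ≤ (N t : ℝ) := Nat.le_ceil _
    have h2 := abs_le.mp h1
    constructor <;> [linarith [h2.1]; linarith [h2.2]]
  refine ⟨fun t => f (N t) t, ?_, ?_⟩
  · simp only [hN, sub_self, abs_zero, Nat.ceil_zero]
    exact hf0 0
  · intro t
    have hd := hf (N t) t (hmem t)
    have heq : (fun s => f (N s) s) =ᶠ[nhds t] (fun s => f (N t) s) := by
      have hopen : Ioo (t₀ - (N t + 1 : ℝ)) (t₀ + (N t + 1 : ℝ)) ∈ nhds t :=
        Ioo_mem_nhds (hmem t).1 (hmem t).2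
      filter_upwards [hopen] with s hs
      exact hagree (N s) (N t) s (hmem s) hs
    exact (hd.congr_of_eventuallyEq heq)

/-- Two-sided Grönwall estimate for scalar functions. -/
theorem gronwall_abs {x w : ℝ → ℝ} {L : ℝ} (hL : 0 ≤ L)
    (hd : ∀ t, HasDerivAt x (w t) t) (hb : ∀ t, |w t| ≤ L * |x t|) :
    ∀ s t : ℝ, |x t| ≤ |x s| * Real.exp (L * |t - s|) := by
  have fwd : ∀ (y z : ℝ → ℝ), (∀ t, HasDerivAt y (z t) t) → (∀ t, |z t| ≤ L * |y t|) →
      ∀ s t : ℝ, s ≤ t → |y t| ≤ |y s| * Real.exp (L * (t - s)) := by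
    intro y z hdy hby s t hst
    have := norm_le_gronwallBound_of_norm_deriv_right_le (f := y) (f' := z)
      (δ := ‖y s‖) (K := L) (ε := 0) (a := s) (b := t)
      (fun τ _ => (hdy τ).continuousAt.continuousWithinAt)
      (fun τ _ => (hdy τ).hasDerivWithinAt)
      le_rfl
      (fun τ _ => by simpa [Real.norm_eq_abs] using hby τ)
    have h2 := this t ⟨hst, le_rfl⟩
    rwa [gronwallBound_ε0, Real.norm_eq_abs, Real.norm_eq_abs] at h2
  intro s t
  rcases le_total s t with h | h
  · rw [abs_of_nonneg (by linarith : (0:ℝ) ≤ t - s)]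
    exact fwd x w hd hb s t h
  · -- reverse time
    set y : ℝ → ℝ := fun τ => x (2 * s - τ) with hy
    have hdy : ∀ τ, HasDerivAt y (-(w (2 * s - τ))) τ := by
      intro τ
      have h1 : HasDerivAt (fun τ : ℝ => 2 * s - τ) (-1) τ := by
        simpa using (hasDerivAt_id τ).const_sub (2 * s)
      have h2 := (hd (2 * s - τ)).scomp τ h1
      have h3 : (-1 : ℝ) • w (2 * s - τ) = -(w (2 * s - τ)) := by simp
      rw [h3] at h2
      exact h2
    have hby : ∀ τ, |(-(w (2 * s - τ)))| ≤ L * |y τ| := by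
      intro τ; rw [abs_neg]; exact hb _
    have := fwd y (fun τ => -(w (2 * s - τ))) hdy hby s (2 * s - t) (by linarith)
    have h2 : y (2 * s - t) = x t := by rw [hy]; ring_nf
    have h3 : y s = x s := by rw [hy]; ring_nf
    rw [h2, h3] at this
    rw [abs_of_nonpos (by linarith : t - s ≤ 0)]
    convert this using 3
    ring

/-- A continuous function that never vanishes and is positive somewhere is positive everywhere. -/
theorem pos_of_ne_zero' {f : ℝ → ℝ} (hf : Continuous f) (h0 : ∀ t, f t ≠ 0) {t₀ : ℝ}
    (h : 0 < f t₀) : ∀ t, 0 < f t := by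
  intro t
  by_contra hneg
  push_neg at hneg
  have hlt : f t < 0 := lt_of_le_of_ne hneg (h0 t)
  rcases le_total t t₀ with h1 | h1
  · have := intermediate_value_Icc h1 hf.continuousOn (a := t) (b := t₀)
    have h2 : (0:ℝ) ∈ Icc (f t) (f t₀) := ⟨hlt.le, h.le⟩
    obtain ⟨c, _, hc⟩ := this h2
    exact h0 c hc
  · have := intermediate_value_Icc' h1 hf.continuousOn (a := t₀) (b := t)
    have h2 : (0:ℝ) ∈ Icc (f t) (f t₀) := ⟨hlt.le, h.le⟩
    obtain ⟨c, _, hc⟩ := this h2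
    exact h0 c hc

/-- radial average of P along direction θ -/
noncomputable def AA (P : ℝ × ℝ → ℝ) (θ r : ℝ) : ℝ :=
  if r = 0 then fderiv ℝ P 0 (uu θ) else P (r • uu θ) / r

lemma AA_spec {P : ℝ × ℝ → ℝ} (hP0 : P 0 = 0) (θ r : ℝ) : P (r • uu θ) = r * AA P θ r := by
  rw [AA]; split_ifs with h
  · subst h; simp [hP0]
  · field_simp

lemma AA_zero (P : ℝ × ℝ → ℝ) (θ : ℝ) : AA P θ 0 = fderiv ℝ P 0 (uu θ) := if_pos rfl

lemma cont_integrand {P : ℝ × ℝ → ℝ} (hP : ContDiff ℝ 2 P) (w z : ℝ × ℝ) :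
    Continuous fun τ : ℝ => fderiv ℝ P (τ • w) z := by
  have h1 : Continuous (fderiv ℝ P) := hP.continuous_fderiv (by norm_num)
  exact (h1.comp (continuous_id.smul continuous_const)).clm_apply continuous_const

lemma AA_integral {P : ℝ × ℝ → ℝ} (hP : ContDiff ℝ 2 P) (hP0 : P 0 = 0) (θ r : ℝ) :
    AA P θ r = ∫ τ in (0:ℝ)..1, fderiv ℝ P (τ • (r • uu θ)) (uu θ) := by
  rcases eq_or_ne r 0 with h | h
  · subst h
    simp only [zero_smul, smul_zero, intervalIntegral.integral_const, sub_zero, one_smul, AA_zero]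
  · have hderiv : ∀ τ ∈ uIcc (0:ℝ) 1, HasDerivAt (fun τ : ℝ => P (τ • (r • uu θ)))
        (fderiv ℝ P (τ • (r • uu θ)) (r • uu θ)) τ := by
      intro τ _
      have h1 : HasDerivAt (fun τ : ℝ => τ • (r • uu θ)) (r • uu θ) τ := by
        simpa using (hasDerivAt_id τ).smul_const (r • uu θ)
      exact ((hP.differentiable (by norm_num)) _).hasFDerivAt.comp_hasDerivAt τ h1
    have hint : IntervalIntegrable (fun τ : ℝ => fderiv ℝ P (τ • (r • uu θ)) (r • uu θ))
        MeasureTheory.volume 0 1 := (cont_integrand hP _ _).intervalIntegrable _ _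
    have h3 := intervalIntegral.integral_eq_sub_of_hasDerivAt hderiv hint
    rw [one_smul, zero_smul, hP0, sub_zero] at h3
    have hsm : EqOn (fun τ : ℝ => fderiv ℝ P (τ • (r • uu θ)) (r • uu θ))
        (fun τ : ℝ => r * fderiv ℝ P (τ • (r • uu θ)) (uu θ)) (uIcc (0:ℝ) 1) := by
      intro τ _; simp only [map_smul, smul_eq_mul]
    rw [intervalIntegral.integral_congr hsm, intervalIntegral.integral_const_mul] at h3
    rw [AA, if_neg h, ← h3]
    field_simp

lemma mem_ball_aux {θ : ℝ} (hu : ‖uu θ‖ ≤ 1) {τ r : ℝ} (hτ : τ ∈ Set.uIoc (0:ℝ) 1)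
    (hr : |r| ≤ 1) : τ • (r • uu θ) ∈ Metric.closedBall (0:ℝ×ℝ) 1 := by
  rw [Set.uIoc_of_le (by norm_num : (0:ℝ) ≤ 1)] at hτ
  rw [Metric.mem_closedBall, dist_zero_right, norm_smul, norm_smul,
    Real.norm_eq_abs, Real.norm_eq_abs]
  have h1 : |τ| ≤ 1 := by rw [abs_of_pos hτ.1]; exact hτ.2
  calc |τ| * (|r| * ‖uu θ‖) ≤ 1 * (|r| * ‖uu θ‖) := by
        apply mul_le_mul_of_nonneg_right h1 (by positivity)
    _ ≤ 1 * 1 := by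
        rw [one_mul, one_mul]; exact mul_le_one₀ hr (norm_nonneg _) hu
    _ = 1 := one_mul 1

section estimates
variable {P : ℝ × ℝ → ℝ} {K M : ℝ}

lemma AA_bound (hP : ContDiff ℝ 2 P) (hP0 : P 0 = 0) (hu : ∀ θ, ‖uu θ‖ ≤ 1)
    (hM : ∀ x ∈ Metric.closedBall (0:ℝ×ℝ) 1, ‖fderiv ℝ P x‖ ≤ M)
    (θ : ℝ) {r : ℝ} (hr : |r| ≤ 1) : |AA P θ r| ≤ M := by
  have hM0 : 0 ≤ M := le_trans (norm_nonneg (fderiv ℝ P 0)) (hM 0 (by simp))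
  rw [AA_integral hP hP0, ← Real.norm_eq_abs]
  have := intervalIntegral.norm_integral_le_of_norm_le_const
    (C := M) (f := fun τ : ℝ => fderiv ℝ P (τ • (r • uu θ)) (uu θ)) (a := 0) (b := 1) ?_
  · simpa using this
  · intro τ hτ
    calc ‖fderiv ℝ P (τ • (r • uu θ)) (uu θ)‖
        ≤ ‖fderiv ℝ P (τ • (r • uu θ))‖ * ‖uu θ‖ := ContinuousLinearMap.le_opNorm _ _
      _ ≤ M * 1 :=
          mul_le_mul (hM _ (mem_ball_aux (hu θ) hτ hr)) (hu θ) (norm_nonneg _) hM0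
      _ = M := mul_one M

lemma AA_lip_r (hP : ContDiff ℝ 2 P) (hP0 : P 0 = 0) (hu : ∀ θ, ‖uu θ‖ ≤ 1) (hK0 : 0 ≤ K)
    (hK : ∀ x ∈ Metric.closedBall (0:ℝ×ℝ) 1, ∀ y ∈ Metric.closedBall (0:ℝ×ℝ) 1,
      ‖fderiv ℝ P x - fderiv ℝ P y‖ ≤ K * ‖x - y‖)
    (θ : ℝ) {r s : ℝ} (hr : |r| ≤ 1) (hs : |s| ≤ 1) :
    |AA P θ r - AA P θ s| ≤ K * |r - s| := by
  rw [AA_integral hP hP0, AA_integral hP hP0 θ s, ← intervalIntegral.integral_sub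
    ((cont_integrand hP _ _).intervalIntegrable _ _)
    ((cont_integrand hP _ _).intervalIntegrable _ _), ← Real.norm_eq_abs]
  have := intervalIntegral.norm_integral_le_of_norm_le_const (C := K * |r - s|)
    (f := fun τ : ℝ => fderiv ℝ P (τ • (r • uu θ)) (uu θ) - fderiv ℝ P (τ • (s • uu θ)) (uu θ))
    (a := 0) (b := 1) ?_
  · simpa using this
  · intro τ hτ
    have h1 : |τ| ≤ 1 := by
      rw [Set.uIoc_of_le (by norm_num : (0:ℝ) ≤ 1)] at hτ
      rw [abs_of_pos hτ.1]; exact hτ.2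
    calc ‖fderiv ℝ P (τ • (r • uu θ)) (uu θ) - fderiv ℝ P (τ • (s • uu θ)) (uu θ)‖
        = ‖(fderiv ℝ P (τ • (r • uu θ)) - fderiv ℝ P (τ • (s • uu θ))) (uu θ)‖ := by
          rw [ContinuousLinearMap.sub_apply]
      _ ≤ ‖fderiv ℝ P (τ • (r • uu θ)) - fderiv ℝ P (τ • (s • uu θ))‖ * ‖uu θ‖ :=
          ContinuousLinearMap.le_opNorm _ _
      _ ≤ (K * ‖τ • (r • uu θ) - τ • (s • uu θ)‖) * 1 := by
          apply mul_le_mul (hK _ (mem_ball_aux (hu θ) hτ hr) _ (mem_ball_aux (hu θ) hτ hs))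
            (hu θ) (norm_nonneg _)
          positivity
      _ = K * (|τ| * (|r - s| * ‖uu θ‖)) := by
          rw [mul_one, ← smul_sub, ← sub_smul, norm_smul, norm_smul,
            Real.norm_eq_abs, Real.norm_eq_abs]
      _ ≤ K * (1 * (|r - s| * 1)) := by
          apply mul_le_mul_of_nonneg_left _ hK0
          apply mul_le_mul h1 _ (by positivity) (by norm_num)
          exact mul_le_mul_of_nonneg_left (hu θ) (abs_nonneg _)
      _ = K * |r - s| := by ring

lemma AA_lip_theta (hP : ContDiff ℝ 2 P) (hP0 : P 0 = 0) (hu : ∀ θ, ‖uu θ‖ ≤ 1)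
    (hud : ∀ θ θ', ‖uu θ - uu θ'‖ ≤ |θ - θ'|) (hK0 : 0 ≤ K) (hM0 : 0 ≤ M)
    (hK : ∀ x ∈ Metric.closedBall (0:ℝ×ℝ) 1, ∀ y ∈ Metric.closedBall (0:ℝ×ℝ) 1,
      ‖fderiv ℝ P x - fderiv ℝ P y‖ ≤ K * ‖x - y‖)
    (hM : ∀ x ∈ Metric.closedBall (0:ℝ×ℝ) 1, ‖fderiv ℝ P x‖ ≤ M)
    (θ θ' : ℝ) {r : ℝ} (hr : |r| ≤ 1) :
    |AA P θ r - AA P θ' r| ≤ (K + M) * |θ - θ'| := by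
  rw [AA_integral hP hP0, AA_integral hP hP0 θ' r, ← intervalIntegral.integral_sub
    ((cont_integrand hP _ _).intervalIntegrable _ _)
    ((cont_integrand hP _ _).intervalIntegrable _ _), ← Real.norm_eq_abs]
  have := intervalIntegral.norm_integral_le_of_norm_le_const (C := (K + M) * |θ - θ'|)
    (f := fun τ : ℝ => fderiv ℝ P (τ • (r • uu θ)) (uu θ) - fderiv ℝ P (τ • (r • uu θ')) (uu θ'))
    (a := 0) (b := 1) ?_
  · simpa using this
  · intro τ hτ
    have h1 : |τ| ≤ 1 := by
      rw [Set.uIoc_of_le (by norm_num : (0:ℝ) ≤ 1)] at hτ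
      rw [abs_of_pos hτ.1]; exact hτ.2
    have hsplit : fderiv ℝ P (τ • (r • uu θ)) (uu θ) - fderiv ℝ P (τ • (r • uu θ')) (uu θ')
        = (fderiv ℝ P (τ • (r • uu θ)) - fderiv ℝ P (τ • (r • uu θ'))) (uu θ)
          + fderiv ℝ P (τ • (r • uu θ')) (uu θ - uu θ') := by
      rw [ContinuousLinearMap.sub_apply, map_sub]; ring
    have hA : ‖(fderiv ℝ P (τ • (r • uu θ)) - fderiv ℝ P (τ • (r • uu θ'))) (uu θ)‖
        ≤ K * |θ - θ'| := by
      calc ‖(fderiv ℝ P (τ • (r • uu θ)) - fderiv ℝ P (τ • (r • uu θ'))) (uu θ)‖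
          ≤ ‖fderiv ℝ P (τ • (r • uu θ)) - fderiv ℝ P (τ • (r • uu θ'))‖ * ‖uu θ‖ :=
            ContinuousLinearMap.le_opNorm _ _
        _ ≤ (K * ‖τ • (r • uu θ) - τ • (r • uu θ')‖) * 1 := by
            apply mul_le_mul (hK _ (mem_ball_aux (hu θ) hτ hr) _ (mem_ball_aux (hu θ') hτ hr))
              (hu θ) (norm_nonneg _)
            positivity
        _ = K * (|τ| * (|r| * ‖uu θ - uu θ'‖)) := by
            rw [mul_one, ← smul_sub, ← smul_sub, norm_smul, norm_smul,
              Real.norm_eq_abs, Real.norm_eq_abs]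
        _ ≤ K * (1 * (1 * |θ - θ'|)) := by
            apply mul_le_mul_of_nonneg_left _ hK0
            apply mul_le_mul h1 _ (by positivity) (by norm_num)
            exact mul_le_mul hr (hud θ θ') (norm_nonneg _) (by norm_num)
        _ = K * |θ - θ'| := by ring
    have hB : ‖fderiv ℝ P (τ • (r • uu θ')) (uu θ - uu θ')‖ ≤ M * |θ - θ'| := by
      calc ‖fderiv ℝ P (τ • (r • uu θ')) (uu θ - uu θ')‖
          ≤ ‖fderiv ℝ P (τ • (r • uu θ'))‖ * ‖uu θ - uu θ'‖ :=
            ContinuousLinearMap.le_opNorm _ _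
        _ ≤ M * |θ - θ'| :=
            mul_le_mul (hM _ (mem_ball_aux (hu θ') hτ hr)) (hud θ θ') (norm_nonneg _) hM0
    calc ‖fderiv ℝ P (τ • (r • uu θ)) (uu θ) - fderiv ℝ P (τ • (r • uu θ')) (uu θ')‖
        = ‖(fderiv ℝ P (τ • (r • uu θ)) - fderiv ℝ P (τ • (r • uu θ'))) (uu θ)
          + fderiv ℝ P (τ • (r • uu θ')) (uu θ - uu θ')‖ := by rw [hsplit]
      _ ≤ _ + _ := norm_add_le _ _
      _ ≤ K * |θ - θ'| + M * |θ - θ'| := add_le_add hA hB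
      _ = (K + M) * |θ - θ'| := by ring

end estimates

lemma clm_decomp (D : ℝ × ℝ →L[ℝ] ℝ) (x y : ℝ) : D (x, y) = x * D (1, 0) + y * D (0, 1) := by
  have h : (x, y) = x • ((1:ℝ), (0:ℝ)) + y • ((0:ℝ), (1:ℝ)) := by
    simp [Prod.smul_mk, smul_eq_mul]
  rw [h, map_add, map_smul, map_smul, smul_eq_mul, smul_eq_mul]

/-- the reflection (x,y) ↦ (x,-y) as a CLM -/
noncomputable def RR : ℝ × ℝ →L[ℝ] ℝ × ℝ :=
  (ContinuousLinearMap.fst ℝ ℝ ℝ).prod (-(ContinuousLinearMap.snd ℝ ℝ ℝ))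

lemma RR_apply (z : ℝ × ℝ) : RR z = (z.1, -z.2) := rfl

lemma fderiv_reflect_odd {P : ℝ × ℝ → ℝ} (hP : Differentiable ℝ P)
    (hsym : ∀ x y : ℝ, P (x, -y) = -P (x, y)) (z : ℝ × ℝ) :
    fderiv ℝ P 0 (z.1, -z.2) = -fderiv ℝ P 0 z := by
  have hD : HasFDerivAt P (fderiv ℝ P 0) 0 := (hP 0).hasFDerivAt
  have hR0 : RR (0 : ℝ × ℝ) = 0 := by simp [RR_apply, Prod.ext_iff]
  have hD' : HasFDerivAt P (fderiv ℝ P 0) (RR (0 : ℝ × ℝ)) := by rwa [hR0]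
  have hcomp : HasFDerivAt (fun p => P (RR p)) ((fderiv ℝ P 0).comp RR) 0 :=
    hD'.comp 0 RR.hasFDerivAt
  have hfun : (fun p => P (RR p)) = fun p => -P p := by
    funext p
    rw [RR_apply]
    exact hsym p.1 p.2
  rw [hfun] at hcomp
  have hneg : HasFDerivAt (fun p => -P p) (-(fderiv ℝ P 0)) 0 := hD.neg
  have huniq : (fderiv ℝ P 0).comp RR = -(fderiv ℝ P 0) := hcomp.unique hneg
  have := congrArg (fun D : ℝ × ℝ →L[ℝ] ℝ => D z) huniq
  simpa [ContinuousLinearMap.comp_apply, RR_apply] using this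

lemma fderiv_reflect_even {Q : ℝ × ℝ → ℝ} (hQ : Differentiable ℝ Q)
    (hsym : ∀ x y : ℝ, Q (x, -y) = Q (x, y)) (z : ℝ × ℝ) :
    fderiv ℝ Q 0 (z.1, -z.2) = fderiv ℝ Q 0 z := by
  have hD : HasFDerivAt Q (fderiv ℝ Q 0) 0 := (hQ 0).hasFDerivAt
  have hR0 : RR (0 : ℝ × ℝ) = 0 := by simp [RR_apply, Prod.ext_iff]
  have hD' : HasFDerivAt Q (fderiv ℝ Q 0) (RR (0 : ℝ × ℝ)) := by rwa [hR0]
  have hcomp : HasFDerivAt (fun p => Q (RR p)) ((fderiv ℝ Q 0).comp RR) 0 :=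
    hD'.comp 0 RR.hasFDerivAt
  have hfun : (fun p => Q (RR p)) = Q := by
    funext p
    rw [RR_apply]
    exact hsym p.1 p.2
  rw [hfun] at hcomp
  have huniq : (fderiv ℝ Q 0).comp RR = fderiv ℝ Q 0 := hcomp.unique hD
  have := congrArg (fun D : ℝ × ℝ →L[ℝ] ℝ => D z) huniq
  simpa [ContinuousLinearMap.comp_apply, RR_apply] using this

lemma smul_uu_neg (r θ : ℝ) : r • uu (-θ) = ((r • uu θ).1, -(r • uu θ).2) := by
  rw [uu, uu]
  simp [Prod.smul_mk, smul_eq_mul, Real.cos_neg, Real.sin_neg, mul_neg]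

lemma AA_neg_odd {P : ℝ × ℝ → ℝ} (hP : Differentiable ℝ P)
    (hsym : ∀ x y : ℝ, P (x, -y) = -P (x, y)) (θ r : ℝ) : AA P (-θ) r = -AA P θ r := by
  rw [AA, AA]
  split_ifs with h
  · rw [show uu (-θ) = ((uu θ).1, -(uu θ).2) from by rw [uu, uu]; simp]
    exact fderiv_reflect_odd hP hsym (uu θ)
  · rw [smul_uu_neg]
    have := hsym (r • uu θ).1 (r • uu θ).2
    rw [this]
    rw [neg_div]
  
lemma AA_even {Q : ℝ × ℝ → ℝ} (hQ : Differentiable ℝ Q)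
    (hsym : ∀ x y : ℝ, Q (x, -y) = Q (x, y)) (θ r : ℝ) : AA Q (-θ) r = AA Q θ r := by
  rw [AA, AA]
  split_ifs with h
  · rw [show uu (-θ) = ((uu θ).1, -(uu θ).2) from by rw [uu, uu]; simp]
    exact fderiv_reflect_even hQ hsym (uu θ)
  · rw [smul_uu_neg]
    have := hsym (r • uu θ).1 (r • uu θ).2
    rw [this]

lemma exists_lip_bound {P : ℝ × ℝ → ℝ} (hP : ContDiff ℝ 2 P) :
    ∃ K M : ℝ, 0 ≤ K ∧ 0 ≤ M ∧
      (∀ x ∈ Metric.closedBall (0:ℝ×ℝ) 1, ∀ y ∈ Metric.closedBall (0:ℝ×ℝ) 1,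
        ‖fderiv ℝ P x - fderiv ℝ P y‖ ≤ K * ‖x - y‖) ∧
      (∀ x ∈ Metric.closedBall (0:ℝ×ℝ) 1, ‖fderiv ℝ P x‖ ≤ M) := by
  have hf1 : ContDiff ℝ 1 (fderiv ℝ P) := hP.fderiv_right (by norm_num)
  obtain ⟨M, hM⟩ := (isCompact_closedBall (0:ℝ×ℝ) 1).exists_bound_of_continuousOn
    ((hf1.continuous).continuousOn)
  obtain ⟨K2, hK2⟩ := (isCompact_closedBall (0:ℝ×ℝ) 1).exists_bound_of_continuousOn
    ((hf1.continuous_fderiv (by norm_num)).continuousOn)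
  have hlip : LipschitzOnWith (Real.toNNReal K2) (fderiv ℝ P) (Metric.closedBall (0:ℝ×ℝ) 1) := by
    apply (convex_closedBall (0:ℝ×ℝ) 1).lipschitzOnWith_of_nnnorm_fderiv_le
      (fun x _ => (hf1.differentiable (by norm_num)) x)
    intro x hx
    rw [← NNReal.coe_le_coe, coe_nnnorm, Real.coe_toNNReal']
    exact le_trans (hK2 x hx) (le_max_left _ _)
  refine ⟨max K2 0, max M 0, le_max_right _ _, le_max_right _ _, ?_, ?_⟩
  · intro x hx y hy
    have := hlip.norm_sub_le hx hy
    rwa [Real.coe_toNNReal'] at this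
  · intro x hx
    exact le_trans (hM x hx) (le_max_left _ _)

/-! ## polar components -/

noncomputable def hh1 (P Q : ℝ × ℝ → ℝ) (θ r : ℝ) : ℝ :=
  Real.cos θ * AA P θ r + Real.sin θ * AA Q θ r

noncomputable def hh2 (P Q : ℝ × ℝ → ℝ) (θ r : ℝ) : ℝ :=
  Real.cos θ * AA Q θ r - Real.sin θ * AA P θ r

lemma id_P (P Q : ℝ × ℝ → ℝ) (θ r : ℝ) :
    Real.cos θ * hh1 P Q θ r - Real.sin θ * hh2 P Q θ r = AA P θ r := by
  rw [hh1, hh2]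
  have h := Real.sin_sq_add_cos_sq θ
  linear_combination AA P θ r * h

lemma id_Q (P Q : ℝ × ℝ → ℝ) (θ r : ℝ) :
    Real.sin θ * hh1 P Q θ r + Real.cos θ * hh2 P Q θ r = AA Q θ r := by
  rw [hh1, hh2]
  have h := Real.sin_sq_add_cos_sq θ
  linear_combination AA Q θ r * h

lemma AA_periodic (P : ℝ × ℝ → ℝ) (θ r : ℝ) : AA P (θ + 2 * Real.pi) r = AA P θ r := by
  rw [AA, AA, uu_periodic θ]

lemma AA_cont_theta {P : ℝ × ℝ → ℝ} (hP : ContDiff ℝ 2 P) (r : ℝ) :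
    Continuous fun θ => AA P θ r := by
  rcases eq_or_ne r 0 with h | h
  · subst h
    simp only [AA, if_pos rfl]
    exact (fderiv ℝ P 0).continuous.comp uu_continuous
  · simp only [AA, if_neg h]
    exact ((hP.continuous).comp ((continuous_const : Continuous fun _ : ℝ => r).smul uu_continuous)).div_const r

lemma hh2_zero (P Q : ℝ × ℝ → ℝ) (θ : ℝ)
    (hPx : fderiv ℝ P 0 (1, 0) = 0) (hQy : fderiv ℝ Q 0 (0, 1) = 0) :
    hh2 P Q θ 0 = Real.cos θ ^ 2 * fderiv ℝ Q 0 (1, 0)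
      - Real.sin θ ^ 2 * fderiv ℝ P 0 (0, 1) := by
  rw [hh2, AA_zero, AA_zero, uu,
    clm_decomp (fderiv ℝ Q 0) (Real.cos θ) (Real.sin θ),
    clm_decomp (fderiv ℝ P 0) (Real.cos θ) (Real.sin θ), hPx, hQy]
  ring

/-! ## clamp -/

noncomputable def cl (r₀ r : ℝ) : ℝ := max (-r₀) (min r r₀)

lemma cl_eq {r₀ r : ℝ} (h : |r| ≤ r₀) : cl r₀ r = r := by
  rw [cl]
  rcases abs_le.mp h with ⟨h1, h2⟩
  rw [min_eq_left h2, max_eq_right h1]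

lemma abs_cl_le_r₀ {r₀ : ℝ} (h : 0 ≤ r₀) (r : ℝ) : |cl r₀ r| ≤ r₀ := by
  rw [cl, abs_le]
  constructor
  · exact le_max_left _ _
  · exact max_le (by linarith) (min_le_right _ _)

lemma abs_cl_le {r₀ : ℝ} (h : 0 ≤ r₀) (r : ℝ) : |cl r₀ r| ≤ |r| := by
  rw [cl, abs_le]
  constructor
  · rcases le_or_gt 0 r with h1 | h1
    · have : (0:ℝ) ≤ min r r₀ := le_min h1 h
      refine le_trans ?_ (le_max_right _ _)
      linarith [abs_nonneg r]
    · refine le_trans ?_ (le_max_right _ _)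
      rw [min_eq_left (by linarith : r ≤ r₀)]
      linarith [neg_abs_le r]
  · apply max_le
    · linarith [abs_nonneg r]
    · exact le_trans (min_le_left _ _) (le_abs_self r)

lemma cl_lip (r₀ : ℝ) (r s : ℝ) : |cl r₀ r - cl r₀ s| ≤ |r - s| := by
  rw [cl, cl, max_comm (-r₀) (min r r₀), max_comm (-r₀) (min s r₀)]
  refine le_trans (abs_max_sub_max_le_abs _ _ _) ?_
  refine le_trans (abs_min_sub_min_le_max r r₀ s r₀) ?_
  simp

/-! ## elementary absolute-value helpers -/

lemma abs_sub' (a b : ℝ) : |a - b| ≤ |a| + |b| := by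
  rw [sub_eq_add_neg]
  exact le_trans (abs_add_le _ _) (by rw [abs_neg])

lemma abs_combo_sub {cθ sθ x1 x2 y1 y2 D : ℝ} (hc : |cθ| ≤ 1) (hs : |sθ| ≤ 1)
    (hx : |x1 - x2| ≤ D) (hy : |y1 - y2| ≤ D) :
    |cθ * x1 - sθ * y1 - (cθ * x2 - sθ * y2)| ≤ 2 * D := by
  have hD : 0 ≤ D := le_trans (abs_nonneg _) hx
  have e : cθ * x1 - sθ * y1 - (cθ * x2 - sθ * y2) = cθ * (x1 - x2) - sθ * (y1 - y2) := by ring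
  rw [e]
  have h1 : |cθ * (x1 - x2)| ≤ D := by
    rw [abs_mul]
    calc |cθ| * |x1 - x2| ≤ 1 * D := mul_le_mul hc hx (abs_nonneg _) (by norm_num)
      _ = D := one_mul D
  have h2 : |sθ * (y1 - y2)| ≤ D := by
    rw [abs_mul]
    calc |sθ| * |y1 - y2| ≤ 1 * D := mul_le_mul hs hy (abs_nonneg _) (by norm_num)
      _ = D := one_mul D
  calc |cθ * (x1 - x2) - sθ * (y1 - y2)| ≤ |cθ * (x1 - x2)| + |sθ * (y1 - y2)| := abs_sub' _ _
    _ ≤ D + D := add_le_add h1 h2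
    _ = 2 * D := by ring

lemma abs_combo_bound {cθ sθ x y D : ℝ} (hc : |cθ| ≤ 1) (hs : |sθ| ≤ 1)
    (hx : |x| ≤ D) (hy : |y| ≤ D) :
    |cθ * x + sθ * y| ≤ 2 * D ∧ |cθ * x - sθ * y| ≤ 2 * D := by
  have h1 : |cθ * x| ≤ D := by
    rw [abs_mul]
    calc |cθ| * |x| ≤ 1 * D := mul_le_mul hc hx (abs_nonneg _) (by norm_num)
      _ = D := one_mul D
  have h2 : |sθ * y| ≤ D := by
    rw [abs_mul]
    calc |sθ| * |y| ≤ 1 * D := mul_le_mul hs hy (abs_nonneg _) (by norm_num)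
      _ = D := one_mul D
  constructor
  · calc |cθ * x + sθ * y| ≤ |cθ * x| + |sθ * y| := abs_add_le _ _
      _ ≤ D + D := add_le_add h1 h2
      _ = 2 * D := by ring
  · calc |cθ * x - sθ * y| ≤ |cθ * x| + |sθ * y| := abs_sub' _ _
      _ ≤ D + D := add_le_add h1 h2
      _ = 2 * D := by ring

lemma abs_combo_theta {c1 c2 s1 s2 x1 x2 y1 y2 D E dθ : ℝ}
    (hc1 : |c1| ≤ 1) (hs1 : |s1| ≤ 1) (hcd : |c1 - c2| ≤ dθ) (hsd : |s1 - s2| ≤ dθ)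
    (hx : |x1 - x2| ≤ D * dθ) (hy : |y1 - y2| ≤ D * dθ) (hx2 : |x2| ≤ E) (hy2 : |y2| ≤ E)
    (hD : 0 ≤ D) (hE : 0 ≤ E) :
    |c1 * x1 - s1 * y1 - (c2 * x2 - s2 * y2)| ≤ (2 * D + 2 * E) * dθ := by
  have hdθ : 0 ≤ dθ := le_trans (abs_nonneg _) hcd
  have e : c1 * x1 - s1 * y1 - (c2 * x2 - s2 * y2)
      = (c1 * (x1 - x2) + (c1 - c2) * x2) - (s1 * (y1 - y2) + (s1 - s2) * y2) := by ring
  rw [e]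
  have h1 : |c1 * (x1 - x2)| ≤ D * dθ := by
    rw [abs_mul]
    calc |c1| * |x1 - x2| ≤ 1 * (D * dθ) := mul_le_mul hc1 hx (abs_nonneg _) (by norm_num)
      _ = D * dθ := one_mul _
  have h2 : |(c1 - c2) * x2| ≤ dθ * E := by
    rw [abs_mul]
    exact mul_le_mul hcd hx2 (abs_nonneg _) hdθ
  have h3 : |s1 * (y1 - y2)| ≤ D * dθ := by
    rw [abs_mul]
    calc |s1| * |y1 - y2| ≤ 1 * (D * dθ) := mul_le_mul hs1 hy (abs_nonneg _) (by norm_num)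
      _ = D * dθ := one_mul _
  have h4 : |(s1 - s2) * y2| ≤ dθ * E := by
    rw [abs_mul]
    exact mul_le_mul hsd hy2 (abs_nonneg _) hdθ
  calc |(c1 * (x1 - x2) + (c1 - c2) * x2) - (s1 * (y1 - y2) + (s1 - s2) * y2)|
      ≤ |c1 * (x1 - x2) + (c1 - c2) * x2| + |s1 * (y1 - y2) + (s1 - s2) * y2| := abs_sub' _ _
    _ ≤ (|c1 * (x1 - x2)| + |(c1 - c2) * x2|) + (|s1 * (y1 - y2)| + |(s1 - s2) * y2|) :=
        add_le_add (abs_add_le _ _) (abs_add_le _ _)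
    _ ≤ (D * dθ + dθ * E) + (D * dθ + dθ * E) := by
        exact add_le_add (add_le_add h1 h2) (add_le_add h3 h4)
    _ = (2 * D + 2 * E) * dθ := by ring

lemma abs_combo_add {cθ sθ x1 x2 y1 y2 D : ℝ} (hc : |cθ| ≤ 1) (hs : |sθ| ≤ 1)
    (hx : |x1 - x2| ≤ D) (hy : |y1 - y2| ≤ D) :
    |cθ * x1 + sθ * y1 - (cθ * x2 + sθ * y2)| ≤ 2 * D := by
  have e : cθ * x1 + sθ * y1 - (cθ * x2 + sθ * y2) = cθ * x1 - (-sθ) * y1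
      - (cθ * x2 - (-sθ) * y2) := by ring
  rw [e]
  exact abs_combo_sub hc (by rwa [abs_neg]) hx hy

lemma abs_div_sub_div {a a' b b' c D1 D2 D3 E : ℝ} (hc : 0 < c) (hb : c ≤ b) (hb' : c ≤ b')
    (hbE : |b'| ≤ E) (h1 : |a - a'| ≤ D1) (h2 : |a'| ≤ D2) (h3 : |b' - b| ≤ D3) :
    |a / b - a' / b'| ≤ (D1 * E + D2 * D3) / c ^ 2 := by
  have hbne : b ≠ 0 := by linarith
  have hb'ne : b' ≠ 0 := by linarith
  have e : a / b - a' / b' = ((a - a') * b' + a' * (b' - b)) / (b * b') := by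
    field_simp; ring
  rw [e, abs_div]
  have hnum : |(a - a') * b' + a' * (b' - b)| ≤ D1 * E + D2 * D3 := by
    calc |(a - a') * b' + a' * (b' - b)| ≤ |(a - a') * b'| + |a' * (b' - b)| := abs_add_le _ _
      _ ≤ D1 * E + D2 * D3 := by
          rw [abs_mul, abs_mul]
          exact add_le_add (mul_le_mul h1 hbE (abs_nonneg _) (le_trans (abs_nonneg _) h1))
            (mul_le_mul h2 h3 (abs_nonneg _) (le_trans (abs_nonneg _) h2))
  have hden : c ^ 2 ≤ |b * b'| := by
    rw [abs_of_pos (by nlinarith : (0:ℝ) < b * b')]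
    nlinarith
  have hD1 : 0 ≤ D1 := le_trans (abs_nonneg _) h1
  have hD2 : 0 ≤ D2 := le_trans (abs_nonneg _) h2
  have hD3 : 0 ≤ D3 := le_trans (abs_nonneg _) h3
  have hE : 0 ≤ E := le_trans (abs_nonneg _) hbE
  exact div_le_div₀ (by nlinarith) hnum (by positivity) hden

/-! ## main lemma, assuming orientation Q_x > 0 -/

theorem key (P Q : ℝ × ℝ → ℝ)
    (hPc : ContDiff ℝ 2 P) (hQc : ContDiff ℝ 2 Q)
    (hPsym : ∀ x y : ℝ, P (x, -y) = -P (x, y))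
    (hQsym : ∀ x y : ℝ, Q (x, -y) = Q (x, y))
    (hP0 : P 0 = 0) (hQ0 : Q 0 = 0)
    (ha : fderiv ℝ P 0 (0, 1) < 0)
    (hb : 0 < fderiv ℝ Q 0 (1, 0)) :
    ∃ U ∈ nhds ((0, 0) : ℝ × ℝ), ∀ p ∈ U, p ≠ ((0, 0) : ℝ × ℝ) →
      ∃ γ : ℝ → ℝ × ℝ, γ 0 = p ∧
        (∀ t, HasDerivAt γ (P (γ t), Q (γ t)) t) ∧
        (∀ t, γ t ≠ ((0, 0) : ℝ × ℝ)) ∧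
        ∃ T : ℝ, 0 < T ∧ ∀ t, γ (t + T) = γ t := by
  obtain ⟨K₁, M₁, hK₁0, hM₁0, hK₁, hM₁⟩ := exists_lip_bound hPc
  obtain ⟨K₂, M₂, hK₂0, hM₂0, hK₂, hM₂⟩ := exists_lip_bound hQc
  set Km : ℝ := max K₁ K₂ + 1 with hKmdef
  set Mm : ℝ := max M₁ M₂ + 1 with hMmdef
  have hKm : 0 < Km := by have := le_max_left K₁ K₂; rw [hKmdef]; linarith
  have hMm : 0 < Mm := by have := le_max_left M₁ M₂; rw [hMmdef]; linarith
  have hAb : ∀ θ r : ℝ, |r| ≤ 1 → |AA P θ r| ≤ Mm ∧ |AA Q θ r| ≤ Mm := by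
    intro θ r hr
    constructor
    · refine le_trans (AA_bound hPc hP0 uu_norm_le hM₁ θ hr) ?_
      have := le_max_left M₁ M₂; rw [hMmdef]; linarith
    · refine le_trans (AA_bound hQc hQ0 uu_norm_le hM₂ θ hr) ?_
      have := le_max_right M₁ M₂; rw [hMmdef]; linarith
  have hAlr : ∀ θ r s : ℝ, |r| ≤ 1 → |s| ≤ 1 →
      |AA P θ r - AA P θ s| ≤ Km * |r - s| ∧ |AA Q θ r - AA Q θ s| ≤ Km * |r - s| := by
    intro θ r s hr hs
    constructor
    · refine le_trans (AA_lip_r hPc hP0 uu_norm_le hK₁0 hK₁ θ hr hs) ?_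
      apply mul_le_mul_of_nonneg_right _ (abs_nonneg _)
      have := le_max_left K₁ K₂; rw [hKmdef]; linarith
    · refine le_trans (AA_lip_r hQc hQ0 uu_norm_le hK₂0 hK₂ θ hr hs) ?_
      apply mul_le_mul_of_nonneg_right _ (abs_nonneg _)
      have := le_max_right K₁ K₂; rw [hKmdef]; linarith
  have hAlθ : ∀ θ θ' r : ℝ, |r| ≤ 1 →
      |AA P θ r - AA P θ' r| ≤ (Km + Mm) * |θ - θ'| ∧
      |AA Q θ r - AA Q θ' r| ≤ (Km + Mm) * |θ - θ'| := by
    intro θ θ' r hr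
    constructor
    · refine le_trans (AA_lip_theta hPc hP0 uu_norm_le uu_dist_le hK₁0 hM₁0 hK₁ hM₁ θ θ' hr) ?_
      apply mul_le_mul_of_nonneg_right _ (abs_nonneg _)
      have h1 := le_max_left K₁ K₂; have h2 := le_max_left M₁ M₂
      rw [hKmdef, hMmdef]; linarith
    · refine le_trans (AA_lip_theta hQc hQ0 uu_norm_le uu_dist_le hK₂0 hM₂0 hK₂ hM₂ θ θ' hr) ?_
      apply mul_le_mul_of_nonneg_right _ (abs_nonneg _)
      have h1 := le_max_right K₁ K₂; have h2 := le_max_right M₁ M₂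
      rw [hKmdef, hMmdef]; linarith
  -- hh-estimates
  have hh2lr : ∀ θ r s : ℝ, |r| ≤ 1 → |s| ≤ 1 →
      |hh2 P Q θ r - hh2 P Q θ s| ≤ 2 * Km * |r - s| := by
    intro θ r s hr hs
    rw [hh2, hh2]
    have h := hAlr θ r s hr hs
    have h2 := abs_combo_sub (abs_cos_le_one θ) (abs_sin_le_one θ) h.2 h.1
    calc |Real.cos θ * AA Q θ r - Real.sin θ * AA P θ r
          - (Real.cos θ * AA Q θ s - Real.sin θ * AA P θ s)|
        ≤ 2 * (Km * |r - s|) := h2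
      _ = 2 * Km * |r - s| := by ring
  have hh1b : ∀ θ r : ℝ, |r| ≤ 1 → |hh1 P Q θ r| ≤ 2 * Mm := by
    intro θ r hr
    rw [hh1]
    exact (abs_combo_bound (abs_cos_le_one θ) (abs_sin_le_one θ) (hAb θ r hr).1 (hAb θ r hr).2).1
  have hh2b : ∀ θ r : ℝ, |r| ≤ 1 → |hh2 P Q θ r| ≤ 2 * Mm := by
    intro θ r hr
    rw [hh2]
    exact (abs_combo_bound (abs_cos_le_one θ) (abs_sin_le_one θ) (hAb θ r hr).2 (hAb θ r hr).1).2
  have hh2lθ : ∀ θ θ' r : ℝ, |r| ≤ 1 →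
      |hh2 P Q θ r - hh2 P Q θ' r| ≤ (2 * (Km + Mm) + 2 * Mm) * |θ - θ'| := by
    intro θ θ' r hr
    rw [hh2, hh2]
    exact abs_combo_theta (abs_cos_le_one θ) (abs_sin_le_one θ) (cos_lip θ θ') (sin_lip θ θ')
      (hAlθ θ θ' r hr).2 (hAlθ θ θ' r hr).1 (hAb θ' r hr).2 (hAb θ' r hr).1
      (by linarith) (by linarith)
  -- linearization facts
  have hPx : fderiv ℝ P 0 (1, 0) = 0 := by
    have h := fderiv_reflect_odd (hPc.differentiable (by norm_num)) hPsym ((1:ℝ), (0:ℝ))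
    simp only [neg_zero] at h
    linarith [h]
  have hQy : fderiv ℝ Q 0 (0, 1) = 0 := by
    have h := fderiv_reflect_even (hQc.differentiable (by norm_num)) hQsym ((0:ℝ), (1:ℝ))
    have h2 : ((0:ℝ), -(1:ℝ)) = -((0:ℝ), (1:ℝ)) := by simp [Prod.ext_iff]
    rw [h2, map_neg] at h
    linarith [h]
  set c₀ : ℝ := min (fderiv ℝ Q 0 (1, 0)) (-(fderiv ℝ P 0 (0, 1))) with hc₀def
  have hc₀ : 0 < c₀ := by rw [hc₀def]; exact lt_min hb (by linarith)
  have hh20 : ∀ θ : ℝ, c₀ ≤ hh2 P Q θ 0 := by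
    intro θ
    rw [hh2_zero P Q θ hPx hQy]
    have h1 := Real.sin_sq_add_cos_sq θ
    have h2 : c₀ ≤ fderiv ℝ Q 0 (1, 0) := min_le_left _ _
    have h3 : c₀ ≤ -(fderiv ℝ P 0 (0, 1)) := min_le_right _ _
    nlinarith [sq_nonneg (Real.sin θ), sq_nonneg (Real.cos θ)]
  set r₀ : ℝ := min (c₀ / (2 * (2 * Km + 1))) (1 / 2) with hr₀def
  have hr₀ : 0 < r₀ := by
    rw [hr₀def]; apply lt_min _ (by norm_num); positivity
  have hr₀le : r₀ ≤ 1 / 2 := min_le_right _ _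
  have hr₀le1 : r₀ ≤ 1 := by linarith
  have hh2pos : ∀ θ r : ℝ, |r| ≤ r₀ → c₀ / 2 ≤ hh2 P Q θ r := by
    intro θ r hr
    have h1 := hh2lr θ r 0 (le_trans hr hr₀le1) (by simp)
    rw [sub_zero] at h1
    have h2 := hh20 θ
    have h3 : |hh2 P Q θ r - hh2 P Q θ 0| ≤ 2 * Km * r₀ := by
      refine le_trans h1 (mul_le_mul_of_nonneg_left hr (by linarith))
    have h4 : 2 * Km * r₀ ≤ c₀ / 2 := by
      have h5 : r₀ ≤ c₀ / (2 * (2 * Km + 1)) := min_le_left _ _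
      have h6 : 0 < 2 * (2 * Km + 1) := by linarith
      rw [le_div_iff₀ h6] at h5
      nlinarith
    have := abs_le.mp (le_trans h1 (le_trans (mul_le_mul_of_nonneg_left hr (by linarith)) h4))
    linarith [this.1]
  set c : ℝ := c₀ / 2 with hcdef
  have hc : 0 < c := by rw [hcdef]; linarith
  set L₀ : ℝ := 2 * Mm / c with hL₀def
  have hL₀ : 0 < L₀ := by rw [hL₀def]; positivity
  set fv : ℝ → ℝ → ℝ := fun θ r => cl r₀ r * hh1 P Q θ (cl r₀ r) / hh2 P Q θ (cl r₀ r)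
    with hfvdef
  have hclr₀1 : ∀ r : ℝ, |cl r₀ r| ≤ 1 := fun r => le_trans (abs_cl_le_r₀ hr₀.le r) hr₀le1
  have hclr₀ : ∀ r : ℝ, |cl r₀ r| ≤ r₀ := fun r => abs_cl_le_r₀ hr₀.le r
  have hfvb : ∀ θ r : ℝ, |fv θ r| ≤ L₀ * |cl r₀ r| := by
    intro θ r
    rw [hfvdef]
    simp only []
    rw [abs_div, abs_mul]
    have hpos := hh2pos θ (cl r₀ r) (hclr₀ r)
    have habs : |hh2 P Q θ (cl r₀ r)| = hh2 P Q θ (cl r₀ r) := abs_of_pos (by linarith)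
    rw [habs]
    rw [div_le_iff₀ (by linarith)]
    have h1 : |hh1 P Q θ (cl r₀ r)| ≤ 2 * Mm := hh1b θ _ (hclr₀1 r)
    calc |cl r₀ r| * |hh1 P Q θ (cl r₀ r)| ≤ |cl r₀ r| * (2 * Mm) :=
          mul_le_mul_of_nonneg_left h1 (abs_nonneg _)
      _ = L₀ * |cl r₀ r| * c := by rw [hL₀def]; field_simp
      _ ≤ L₀ * |cl r₀ r| * hh2 P Q θ (cl r₀ r) := by
          apply mul_le_mul_of_nonneg_left (by linarith)
          positivity
  have hfvb1 : ∀ θ r : ℝ, |fv θ r| ≤ L₀ * |r| :=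
    fun θ r => le_trans (hfvb θ r) (mul_le_mul_of_nonneg_left (abs_cl_le hr₀.le r) hL₀.le)
  have hfvb2 : ∀ θ r : ℝ, |fv θ r| ≤ L₀ * r₀ :=
    fun θ r => le_trans (hfvb θ r) (mul_le_mul_of_nonneg_left (hclr₀ r) hL₀.le)
  have hh1lr : ∀ θ r s : ℝ, |r| ≤ 1 → |s| ≤ 1 →
      |hh1 P Q θ r - hh1 P Q θ s| ≤ 2 * Km * |r - s| := by
    intro θ r s hr hs
    rw [hh1, hh1]
    have h := hAlr θ r s hr hs
    have h2 := abs_combo_add (abs_cos_le_one θ) (abs_sin_le_one θ) h.1 h.2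
    calc |Real.cos θ * AA P θ r + Real.sin θ * AA Q θ r
          - (Real.cos θ * AA P θ s + Real.sin θ * AA Q θ s)|
        ≤ 2 * (Km * |r - s|) := h2
      _ = 2 * Km * |r - s| := by ring
  obtain ⟨Lf, hLf0, hfvl⟩ : ∃ Lf : ℝ, 0 ≤ Lf ∧ ∀ θ r s, |fv θ r - fv θ s| ≤ Lf * |r - s| := by
    refine ⟨(((2 * Mm + 2 * Km * r₀) * (2 * Mm) + (2 * Mm * r₀) * (2 * Km))) / c ^ 2,
      by positivity, ?_⟩
    intro θ r s
    have hx0 : |cl r₀ r| ≤ r₀ := hclr₀ r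
    have hy0 : |cl r₀ s| ≤ r₀ := hclr₀ s
    have hx1 : |cl r₀ r| ≤ 1 := hclr₀1 r
    have hy1 : |cl r₀ s| ≤ 1 := hclr₀1 s
    have h2x := hh2pos θ (cl r₀ r) hx0
    have h2y := hh2pos θ (cl r₀ s) hy0
    have hN : |cl r₀ r * hh1 P Q θ (cl r₀ r) - cl r₀ s * hh1 P Q θ (cl r₀ s)|
        ≤ (2 * Mm + 2 * Km * r₀) * |cl r₀ r - cl r₀ s| := by
      have e : cl r₀ r * hh1 P Q θ (cl r₀ r) - cl r₀ s * hh1 P Q θ (cl r₀ s)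
          = (cl r₀ r - cl r₀ s) * hh1 P Q θ (cl r₀ r)
            + cl r₀ s * (hh1 P Q θ (cl r₀ r) - hh1 P Q θ (cl r₀ s)) := by ring
      rw [e]
      calc |(cl r₀ r - cl r₀ s) * hh1 P Q θ (cl r₀ r)
            + cl r₀ s * (hh1 P Q θ (cl r₀ r) - hh1 P Q θ (cl r₀ s))|
          ≤ |(cl r₀ r - cl r₀ s) * hh1 P Q θ (cl r₀ r)|
            + |cl r₀ s * (hh1 P Q θ (cl r₀ r) - hh1 P Q θ (cl r₀ s))| := abs_add_le _ _
        _ ≤ |cl r₀ r - cl r₀ s| * (2 * Mm)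
            + r₀ * (2 * Km * |cl r₀ r - cl r₀ s|) := by
            rw [abs_mul, abs_mul]
            exact add_le_add
              (mul_le_mul_of_nonneg_left (hh1b θ _ hx1) (abs_nonneg _))
              (mul_le_mul hy0 (hh1lr θ _ _ hx1 hy1) (abs_nonneg _) hr₀.le)
        _ = (2 * Mm + 2 * Km * r₀) * |cl r₀ r - cl r₀ s| := by ring
    have hq := abs_div_sub_div (a := cl r₀ r * hh1 P Q θ (cl r₀ r))
      (a' := cl r₀ s * hh1 P Q θ (cl r₀ s))
      (b := hh2 P Q θ (cl r₀ r)) (b' := hh2 P Q θ (cl r₀ s)) (c := c)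
      (D1 := (2 * Mm + 2 * Km * r₀) * |cl r₀ r - cl r₀ s|)
      (D2 := 2 * Mm * r₀) (D3 := 2 * Km * |cl r₀ r - cl r₀ s|) (E := 2 * Mm)
      hc h2x h2y (hh2b θ _ hy1) hN ?_ ?_
    · refine le_trans hq ?_
      have hcl := cl_lip r₀ r s
      have e2 : ((2 * Mm + 2 * Km * r₀) * |cl r₀ r - cl r₀ s| * (2 * Mm)
          + 2 * Mm * r₀ * (2 * Km * |cl r₀ r - cl r₀ s|)) / c ^ 2
          = (((2 * Mm + 2 * Km * r₀) * (2 * Mm) + (2 * Mm * r₀) * (2 * Km)) / c ^ 2)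
            * |cl r₀ r - cl r₀ s| := by ring
      rw [e2]
      exact mul_le_mul_of_nonneg_left hcl (by positivity)
    · rw [abs_mul]
      calc |cl r₀ s| * |hh1 P Q θ (cl r₀ s)| ≤ r₀ * (2 * Mm) :=
            mul_le_mul hy0 (hh1b θ _ hy1) (abs_nonneg _) hr₀.le
        _ = 2 * Mm * r₀ := by ring
    · rw [abs_sub_comm (cl r₀ r) (cl r₀ s)]
      exact hh2lr θ _ _ hy1 hx1
  have hfvcont : ∀ r, Continuous fun θ => fv θ r := by
    intro r
    rw [hfvdef]
    simp only [hh1, hh2]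
    apply Continuous.div
    · exact continuous_const.mul ((Real.continuous_cos.mul (AA_cont_theta hPc _)).add
        (Real.continuous_sin.mul (AA_cont_theta hQc _)))
    · exact (Real.continuous_cos.mul (AA_cont_theta hQc _)).sub
        (Real.continuous_sin.mul (AA_cont_theta hPc _))
    · intro θ
      have h := hh2pos θ (cl r₀ r) (hclr₀ r)
      rw [hh2] at h
      intro hzero
      rw [hzero] at h
      linarith
  have hfvodd : ∀ θ r, fv (-θ) r = -fv θ r := by
    have hA := AA_neg_odd (hPc.differentiable (by norm_num)) hPsym
    have hB := AA_even (hQc.differentiable (by norm_num)) hQsym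
    intro θ r
    rw [hfvdef]
    simp only [hh1, hh2, Real.cos_neg, Real.sin_neg, hA, hB]
    ring
  have hfvper : ∀ θ r, fv (θ + 2 * Real.pi) r = fv θ r := by
    intro θ r
    rw [hfvdef]
    simp only [hh1, hh2, AA_periodic, Real.cos_add_two_pi, Real.sin_add_two_pi]
  have hfvlip : ∀ θ, LipschitzWith (Real.toNNReal Lf) (fv θ) := by
    intro θ
    apply LipschitzWith.of_dist_le_mul
    intro r s
    rw [Real.dist_eq, Real.dist_eq, Real.coe_toNNReal']
    exact le_trans (hfvl θ r s) (mul_le_mul_of_nonneg_right (le_max_left _ _) (abs_nonneg _))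
  have hfveq : ∀ θ r, fv θ r = cl r₀ r * hh1 P Q θ (cl r₀ r) / hh2 P Q θ (cl r₀ r) :=
    fun _ _ => rfl
  refine ⟨Metric.ball (0 : ℝ × ℝ) (r₀ * Real.exp (-(L₀ * (4 * Real.pi))) / 2), ?_, ?_⟩
  · have h0 : ((0, 0) : ℝ × ℝ) = (0 : ℝ × ℝ) := rfl
    rw [h0]
    apply Metric.ball_mem_nhds
    have := Real.exp_pos (-(L₀ * (4 * Real.pi)))
    positivity
  intro p hp hpne
  set z : ℂ := ⟨p.1, p.2⟩ with hzdef
  have hz : z ≠ 0 := by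
    intro h
    apply hpne
    have h1 : p.1 = 0 := by have := congrArg Complex.re h; simpa [hzdef] using this
    have h2 : p.2 = 0 := by have := congrArg Complex.im h; simpa [hzdef] using this
    exact Prod.ext_iff.mpr ⟨h1, h2⟩
  set rp : ℝ := ‖z‖ with hrpdef
  set θp : ℝ := Complex.arg z with hθpdef
  have hrp : 0 < rp := by rw [hrpdef]; exact norm_pos_iff.mpr hz
  have hcos : rp * Real.cos θp = p.1 := by
    rw [hθpdef, Complex.cos_arg hz, hrpdef]
    have : z.re = p.1 := rfl
    rw [this]
    field_simp
  have hsin : rp * Real.sin θp = p.2 := by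
    rw [hθpdef, Complex.sin_arg, hrpdef]
    have : z.im = p.2 := rfl
    rw [this]
    field_simp
  have hθp : |θp| ≤ Real.pi := Complex.abs_arg_le_pi z
  have hrpsmall : rp < r₀ * Real.exp (-(L₀ * (4 * Real.pi))) := by
    have h1 : rp ≤ |p.1| + |p.2| := Complex.norm_le_abs_re_add_abs_im z
    have h2 : ‖p‖ < r₀ * Real.exp (-(L₀ * (4 * Real.pi))) / 2 := by
      have := Metric.mem_ball.mp hp
      rwa [dist_zero_right] at this
    have h3 : |p.1| ≤ ‖p‖ := by
      rw [Prod.norm_def]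
      exact le_trans (le_of_eq (Real.norm_eq_abs p.1).symm) (le_max_left _ _)
    have h4 : |p.2| ≤ ‖p‖ := by
      rw [Prod.norm_def]
      exact le_trans (le_of_eq (Real.norm_eq_abs p.2).symm) (le_max_right _ _)
    linarith
  -- the radial solution
  obtain ⟨R, hR0, hRd⟩ := glue_exists (v := fv) (K := Real.toNNReal Lf) (C := L₀ * r₀)
    (by positivity) hfvlip hfvcont (fun θ r => hfvb2 θ r) θp rp
  have hRgrow : ∀ s t : ℝ, |R t| ≤ |R s| * Real.exp (L₀ * |t - s|) :=
    gronwall_abs hL₀.le hRd (fun θ => hfvb1 θ (R θ))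
  have hRlower : ∀ θ, rp * Real.exp (-(L₀ * |θ - θp|)) ≤ |R θ| := by
    intro θ
    have h := hRgrow θ θp
    rw [hR0, abs_sub_comm θp θ] at h
    have hexp := Real.exp_pos (L₀ * |θ - θp|)
    rw [Real.exp_neg]
    rw [mul_inv_le_iff₀ hexp]
    calc rp = |rp| := (abs_of_pos hrp).symm
      _ ≤ |R θ| * Real.exp (L₀ * |θ - θp|) := h
  have hRne : ∀ θ, R θ ≠ 0 := by
    intro θ h
    have h2 := hRlower θ
    rw [h, abs_zero] at h2
    nlinarith [Real.exp_pos (-(L₀ * |θ - θp|))]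
  have hRcont : Continuous R := by
    rw [continuous_iff_continuousAt]; exact fun θ => (hRd θ).continuousAt
  have hRpos : ∀ θ, 0 < R θ := pos_of_ne_zero' hRcont hRne (t₀ := θp) (by rw [hR0]; exact hrp)
  -- evenness and periodicity of R
  have hReven : ∀ θ, R (-θ) = R θ := by
    have hβd : ∀ θ, HasDerivAt (fun θ => R (-θ)) (fv θ (R (-θ))) θ := by
      intro θ
      have h1 : HasDerivAt (fun θ : ℝ => -θ) (-1) θ := (hasDerivAt_id θ).neg
      have h2 := (hRd (-θ)).scomp θ h1
      have h3 : ((-1 : ℝ)) • fv (-θ) (R (-θ)) = fv θ (R (-θ)) := by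
        rw [smul_eq_mul, hfvodd]; ring
      rw [h3] at h2
      exact h2
    have h0 : (fun θ => R (-θ)) 0 = R 0 := by show R (-0) = R 0; rw [neg_zero]
    exact glue_unique hfvlip hβd hRd h0
  have hRper : Function.Periodic R (2 * Real.pi) := by
    have hwd : ∀ θ, HasDerivAt (fun θ => R (θ + 2 * Real.pi)) (fv θ (R (θ + 2 * Real.pi))) θ := by
      intro θ
      have h1 : HasDerivAt (fun θ : ℝ => θ + 2 * Real.pi) 1 θ := (hasDerivAt_id θ).add_const _
      have h2 := (hRd (θ + 2 * Real.pi)).scomp θ h1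
      have h3 : (1 : ℝ) • fv (θ + 2 * Real.pi) (R (θ + 2 * Real.pi))
          = fv θ (R (θ + 2 * Real.pi)) := by
        rw [smul_eq_mul, hfvper]; ring
      rw [h3] at h2
      exact h2
    have h0 : (fun θ => R (θ + 2 * Real.pi)) (-Real.pi) = R (-Real.pi) := by
      show R (-Real.pi + 2 * Real.pi) = R (-Real.pi)
      have he : -Real.pi + 2 * Real.pi = Real.pi := by ring
      rw [he]
      exact (hReven Real.pi).symm
    exact glue_unique hfvlip hwd hRd h0
  -- global bound on R
  have hRwin : ∀ θ, |θ| ≤ Real.pi → |R θ| ≤ r₀ := by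
    intro θ hθ
    have h := hRgrow θp θ
    rw [hR0, abs_of_pos hrp] at h
    have hd : |θ - θp| ≤ 2 * Real.pi := by
      have h5 := abs_sub' θ θp
      linarith
    have h6 : rp * Real.exp (L₀ * |θ - θp|) ≤ rp * Real.exp (L₀ * (2 * Real.pi)) :=
      mul_le_mul_of_nonneg_left
        (Real.exp_le_exp.mpr (mul_le_mul_of_nonneg_left hd hL₀.le)) hrp.le
    refine le_trans h (le_trans h6 ?_)
    have h7 : rp * Real.exp (L₀ * (2 * Real.pi))
        < r₀ * Real.exp (-(L₀ * (4 * Real.pi))) * Real.exp (L₀ * (2 * Real.pi)) :=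
      mul_lt_mul_of_pos_right hrpsmall (Real.exp_pos _)
    have h8 : r₀ * Real.exp (-(L₀ * (4 * Real.pi))) * Real.exp (L₀ * (2 * Real.pi))
        = r₀ * Real.exp (-(L₀ * (2 * Real.pi))) := by
      rw [mul_assoc, ← Real.exp_add]
      congr 2
      ring
    have h9 : Real.exp (-(L₀ * (2 * Real.pi))) ≤ 1 := by
      calc Real.exp (-(L₀ * (2 * Real.pi))) ≤ Real.exp 0 :=
            Real.exp_le_exp.mpr (by nlinarith [Real.pi_pos])
        _ = 1 := Real.exp_zero
    nlinarith
  have hRbound : ∀ θ, |R θ| ≤ r₀ := by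
    intro θ
    set k : ℤ := round (θ / (2 * Real.pi)) with hkdef
    have h2π : (0:ℝ) < 2 * Real.pi := by nlinarith [Real.pi_pos]
    have h1 : |θ / (2 * Real.pi) - k| ≤ 1 / 2 := abs_sub_round _
    have h2 : |θ - k * (2 * Real.pi)| ≤ Real.pi := by
      have he : θ - k * (2 * Real.pi) = (θ / (2 * Real.pi) - k) * (2 * Real.pi) := by
        rw [sub_mul, div_mul_cancel₀ _ (ne_of_gt h2π)]
      rw [he, abs_mul, abs_of_pos h2π]
      calc |θ / (2 * Real.pi) - ↑k| * (2 * Real.pi) ≤ (1 / 2) * (2 * Real.pi) :=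
            mul_le_mul_of_nonneg_right h1 h2π.le
        _ = Real.pi := by ring
    have h3 : R (θ - k * (2 * Real.pi)) = R θ := hRper.sub_int_mul_eq k
    rw [← h3]
    exact hRwin _ h2
  have hRb1 : ∀ θ, |R θ| ≤ 1 := fun θ => le_trans (hRbound θ) hr₀le1
  have hRlip : ∀ θ θ', |R θ - R θ'| ≤ (L₀ * r₀) * |θ - θ'| := by
    have hdiff : Differentiable ℝ R := fun θ => (hRd θ).differentiableAt
    have hlip : LipschitzWith (Real.toNNReal (L₀ * r₀)) R := by
      apply lipschitzWith_of_nnnorm_deriv_le hdiff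
      intro θ
      rw [← NNReal.coe_le_coe, coe_nnnorm, Real.coe_toNNReal', Real.norm_eq_abs,
        (hRd θ).deriv]
      exact le_trans (hfvb2 θ (R θ)) (le_max_left _ _)
    intro θ θ'
    have h := hlip.dist_le_mul θ θ'
    rw [Real.dist_eq, Real.dist_eq, Real.coe_toNNReal',
      max_eq_left (by positivity : (0:ℝ) ≤ L₀ * r₀)] at h
    exact h
  -- the angular equation
  set g : ℝ → ℝ := fun θ => hh2 P Q θ (R θ) with hgdef
  have hgeq : ∀ θ, g θ = hh2 P Q θ (R θ) := fun θ => rfl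
  have hgc : ∀ θ, c ≤ g θ := fun θ => hh2pos θ (R θ) (hRbound θ)
  have hgb : ∀ θ, |g θ| ≤ 2 * Mm := fun θ => hh2b θ (R θ) (hRb1 θ)
  set Lg : ℝ := (2 * (Km + Mm) + 2 * Mm) + 2 * Km * (L₀ * r₀) with hLgdef
  have hLg0 : 0 ≤ Lg := by rw [hLgdef]; positivity
  have hgl : ∀ θ θ', |g θ - g θ'| ≤ Lg * |θ - θ'| := by
    intro θ θ'
    have e : g θ - g θ' = (hh2 P Q θ (R θ) - hh2 P Q θ' (R θ))
        + (hh2 P Q θ' (R θ) - hh2 P Q θ' (R θ')) := by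
      rw [hgeq, hgeq]; ring
    rw [e]
    calc |(hh2 P Q θ (R θ) - hh2 P Q θ' (R θ)) + (hh2 P Q θ' (R θ) - hh2 P Q θ' (R θ'))|
        ≤ |hh2 P Q θ (R θ) - hh2 P Q θ' (R θ)| + |hh2 P Q θ' (R θ) - hh2 P Q θ' (R θ')| :=
          abs_add_le _ _
      _ ≤ (2 * (Km + Mm) + 2 * Mm) * |θ - θ'| + 2 * Km * |R θ - R θ'| :=
          add_le_add (hh2lθ θ θ' (R θ) (hRb1 θ)) (hh2lr θ' (R θ) (R θ') (hRb1 θ) (hRb1 θ'))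
      _ ≤ (2 * (Km + Mm) + 2 * Mm) * |θ - θ'| + 2 * Km * ((L₀ * r₀) * |θ - θ'|) := by
          apply add_le_add le_rfl
          exact mul_le_mul_of_nonneg_left (hRlip θ θ') (by linarith)
      _ = Lg * |θ - θ'| := by rw [hLgdef]; ring
  have hglip : LipschitzWith (Real.toNNReal Lg) g := by
    apply LipschitzWith.of_dist_le_mul
    intro x y
    rw [Real.dist_eq, Real.dist_eq, Real.coe_toNNReal']
    exact le_trans (hgl x y) (mul_le_mul_of_nonneg_right (le_max_left _ _) (abs_nonneg _))
  obtain ⟨Θf, hΘ0, hΘd⟩ := glue_exists (v := fun _ x => g x) (C := 2 * Mm)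
    (by positivity) (fun _ => hglip) (fun _ => continuous_const) (fun _ x => hgb x) 0 θp
  have hΘdiff : Differentiable ℝ Θf := fun t => (hΘd t).differentiableAt
  have hgrow : ∀ t : ℝ, 0 ≤ t → θp + c * t ≤ Θf t := by
    intro t ht
    have hφd : ∀ s : ℝ, HasDerivAt (fun s => Θf s - s * c) (g (Θf s) - c) s := by
      intro s
      exact (hΘd s).sub (hasDerivAt_mul_const c)
    have hφmono : Monotone (fun s => Θf s - s * c) := by
      apply monotone_of_deriv_nonneg (fun s => (hφd s).differentiableAt)
      intro s
      rw [(hφd s).deriv]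
      linarith [hgc (Θf s)]
    have h2 := hφmono ht
    simp only [zero_mul, sub_zero, hΘ0] at h2
    linarith
  have h2π : (0:ℝ) < 2 * Real.pi := by nlinarith [Real.pi_pos]
  have hTb : (0:ℝ) < (2 * Real.pi + 1) / c := by positivity
  have hub : θp + 2 * Real.pi ≤ Θf ((2 * Real.pi + 1) / c) := by
    have h1 := hgrow ((2 * Real.pi + 1) / c) hTb.le
    have h2 : c * ((2 * Real.pi + 1) / c) = 2 * Real.pi + 1 := by field_simp
    linarith
  have hmem2 : θp + 2 * Real.pi ∈ Icc (Θf 0) (Θf ((2 * Real.pi + 1) / c)) := by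
    rw [hΘ0]
    exact ⟨by linarith, hub⟩
  obtain ⟨T, hTmem, hTval⟩ :=
    intermediate_value_Icc hTb.le hΘdiff.continuous.continuousOn hmem2
  have hTpos : 0 < T := by
    rcases lt_or_eq_of_le hTmem.1 with h | h
    · exact h
    · exfalso
      rw [← h, hΘ0] at hTval
      linarith
  have hgper : ∀ x, g (x + 2 * Real.pi) = g x := by
    intro x
    rw [hgeq, hgeq, hRper x, hh2, hh2, AA_periodic, AA_periodic,
      Real.cos_add_two_pi, Real.sin_add_two_pi]
  have hΘper : ∀ t, Θf (t + T) = Θf t + 2 * Real.pi := by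
    have hα₁ : ∀ t, HasDerivAt (fun t => Θf (t + T)) (g (Θf (t + T))) t := by
      intro t
      have h1 : HasDerivAt (fun t : ℝ => t + T) 1 t := (hasDerivAt_id t).add_const T
      have h2 := (hΘd (t + T)).scomp t h1
      rw [one_smul] at h2
      exact h2
    have hα₂ : ∀ t, HasDerivAt (fun t => Θf t + 2 * Real.pi) (g (Θf t + 2 * Real.pi)) t := by
      intro t
      rw [hgper]
      exact (hΘd t).add_const _
    have h0 : (fun t => Θf (t + T)) 0 = (fun t => Θf t + 2 * Real.pi) 0 := by
      show Θf (0 + T) = Θf 0 + 2 * Real.pi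
      rw [zero_add, hTval, hΘ0]
    exact glue_unique (v := fun _ x => g x) (fun _ => hglip) hα₁ hα₂ h0
  -- the orbit
  refine ⟨fun t => (R (Θf t) * Real.cos (Θf t), R (Θf t) * Real.sin (Θf t)), ?_, ?_, ?_,
    T, hTpos, ?_⟩
  · show (R (Θf 0) * Real.cos (Θf 0), R (Θf 0) * Real.sin (Θf 0)) = p
    rw [hΘ0, hR0]
    exact Prod.ext_iff.mpr ⟨hcos, hsin⟩
  · intro t
    have hcl : cl r₀ (R (Θf t)) = R (Θf t) := cl_eq (hRbound _)
    have hR' : HasDerivAt (fun s => R (Θf s)) (fv (Θf t) (R (Θf t)) * g (Θf t)) t := by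
      have h2 := (hRd (Θf t)).scomp t (hΘd t)
      have h3 : fv (Θf t) (R (Θf t)) * g (Θf t) = g (Θf t) • fv (Θf t) (R (Θf t)) := by rw [smul_eq_mul]; ring
      rw [h3]
      exact h2
    have hcos' : HasDerivAt (fun s => Real.cos (Θf s)) (-Real.sin (Θf t) * g (Θf t)) t := by
      have h2 := (Real.hasDerivAt_cos (Θf t)).scomp t (hΘd t)
      have h3 : -Real.sin (Θf t) * g (Θf t) = g (Θf t) • -Real.sin (Θf t) := by rw [smul_eq_mul]; ring
      rw [h3]
      exact h2
    have hsin' : HasDerivAt (fun s => Real.sin (Θf s)) (Real.cos (Θf t) * g (Θf t)) t := by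
      have h2 := (Real.hasDerivAt_sin (Θf t)).scomp t (hΘd t)
      have h3 : Real.cos (Θf t) * g (Θf t) = g (Θf t) • Real.cos (Θf t) := by rw [smul_eq_mul]; ring
      rw [h3]
      exact h2
    have hx := hR'.mul hcos'
    have hy := hR'.mul hsin'
    have hne : hh2 P Q (Θf t) (R (Θf t)) ≠ 0 := by
      have := hgc (Θf t)
      rw [hgeq] at this
      linarith
    have hfg : fv (Θf t) (R (Θf t)) * g (Θf t) = R (Θf t) * hh1 P Q (Θf t) (R (Θf t)) := by
      rw [hfveq, hgeq, hcl]
      field_simp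
    have hpair : (R (Θf t) * Real.cos (Θf t), R (Θf t) * Real.sin (Θf t))
        = R (Θf t) • uu (Θf t) := by
      rw [uu, Prod.smul_mk, smul_eq_mul, smul_eq_mul]
    have hvx : fv (Θf t) (R (Θf t)) * g (Θf t) * Real.cos (Θf t)
        + R (Θf t) * (-Real.sin (Θf t) * g (Θf t))
        = P ((R (Θf t) * Real.cos (Θf t), R (Θf t) * Real.sin (Θf t))) := by
      rw [hfg, hgeq, hpair, AA_spec hP0 (Θf t) (R (Θf t))]
      have hidP := id_P P Q (Θf t) (R (Θf t))
      linear_combination (R (Θf t)) * hidP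
    have hvy : fv (Θf t) (R (Θf t)) * g (Θf t) * Real.sin (Θf t)
        + R (Θf t) * (Real.cos (Θf t) * g (Θf t))
        = Q ((R (Θf t) * Real.cos (Θf t), R (Θf t) * Real.sin (Θf t))) := by
      rw [hfg, hgeq, hpair, AA_spec hQ0 (Θf t) (R (Θf t))]
      have hidQ := id_Q P Q (Θf t) (R (Θf t))
      linear_combination (R (Θf t)) * hidQ
    have hprod := hx.prodMk hy
    rw [hvx, hvy] at hprod
    exact hprod
  · intro t h
    have h1 : R (Θf t) * Real.cos (Θf t) = 0 := congrArg Prod.fst h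
    have h2 : R (Θf t) * Real.sin (Θf t) = 0 := congrArg Prod.snd h
    have hRne' : R (Θf t) ≠ 0 := (hRpos (Θf t)).ne'
    have hc0 : Real.cos (Θf t) = 0 := by
      rcases mul_eq_zero.mp h1 with h3 | h3
      · exact absurd h3 hRne'
      · exact h3
    have hs0 : Real.sin (Θf t) = 0 := by
      rcases mul_eq_zero.mp h2 with h3 | h3
      · exact absurd h3 hRne'
      · exact h3
    have := Real.sin_sq_add_cos_sq (Θf t)
    rw [hc0, hs0] at this
    norm_num at this
  · intro t
    show (R (Θf (t + T)) * Real.cos (Θf (t + T)), R (Θf (t + T)) * Real.sin (Θf (t + T)))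
      = (R (Θf t) * Real.cos (Θf t), R (Θf t) * Real.sin (Θf t))
    rw [hΘper t, hRper (Θf t), Real.cos_add_two_pi, Real.sin_add_two_pi]

lemma fderiv_comp_neg {P : ℝ × ℝ → ℝ} (hP : Differentiable ℝ P) (w : ℝ × ℝ) :
    fderiv ℝ (fun q => P (-q)) 0 w = -(fderiv ℝ P 0 w) := by
  have hD : HasFDerivAt P (fderiv ℝ P 0) 0 := (hP 0).hasFDerivAt
  have hneg : HasFDerivAt (fun q : ℝ × ℝ => -q) (-(ContinuousLinearMap.id ℝ (ℝ × ℝ))) 0 :=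
    (hasFDerivAt_id (0 : ℝ × ℝ)).neg
  have hD' : HasFDerivAt P (fderiv ℝ P 0) ((fun q : ℝ × ℝ => -q) 0) := by
    simpa using hD
  have hcomp := hD'.comp 0 hneg
  have hcomp' : HasFDerivAt (fun q : ℝ × ℝ => P (-q))
      ((fderiv ℝ P 0).comp (-ContinuousLinearMap.id ℝ (ℝ × ℝ))) 0 := hcomp
  rw [hcomp'.fderiv]
  simp

/-- Reversibility criterion: if an analytic planar vector field `(P, Q)` satisfies
`P(x,-y) = -P(x,y)`, `Q(x,-y) = Q(x,y)`, the origin is an equilibrium, and the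
linearization at the origin has purely imaginary nonzero eigenvalues (trace zero,
positive determinant), then the origin is a center: there is a neighborhood of the
origin in which every point other than the origin lies on a periodic orbit. -/
theorem stmt_9 (P Q : ℝ × ℝ → ℝ)
    (hPa : ∀ p : ℝ × ℝ, AnalyticAt ℝ P p) (hQa : ∀ p : ℝ × ℝ, AnalyticAt ℝ Q p)
    (hPsym : ∀ x y : ℝ, P (x, -y) = -P (x, y))
    (hQsym : ∀ x y : ℝ, Q (x, -y) = Q (x, y))
    (hP0 : P (0, 0) = 0) (hQ0 : Q (0, 0) = 0)
    (htr : fderiv ℝ P (0, 0) (1, 0) + fderiv ℝ Q (0, 0) (0, 1) = 0)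
    (hdet : 0 < fderiv ℝ P (0, 0) (1, 0) * fderiv ℝ Q (0, 0) (0, 1) -
      fderiv ℝ P (0, 0) (0, 1) * fderiv ℝ Q (0, 0) (1, 0)) :
    ∃ U ∈ nhds ((0, 0) : ℝ × ℝ), ∀ p ∈ U, p ≠ ((0, 0) : ℝ × ℝ) →
      ∃ γ : ℝ → ℝ × ℝ, γ 0 = p ∧
        (∀ t, HasDerivAt γ (P (γ t), Q (γ t)) t) ∧
        (∀ t, γ t ≠ ((0, 0) : ℝ × ℝ)) ∧
        ∃ T : ℝ, 0 < T ∧ ∀ t, γ (t + T) = γ t := by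
  have hPc : ContDiff ℝ 2 P := contDiff_iff_contDiffAt.mpr (fun p => (hPa p).contDiffAt)
  have hQc : ContDiff ℝ 2 Q := contDiff_iff_contDiffAt.mpr (fun p => (hQa p).contDiffAt)
  have hP0' : P 0 = 0 := hP0
  have hQ0' : Q 0 = 0 := hQ0
  have hPx : fderiv ℝ P 0 (1, 0) = 0 := by
    have h := fderiv_reflect_odd (hPc.differentiable (by norm_num)) hPsym ((1:ℝ), (0:ℝ))
    simp only [neg_zero] at h
    linarith
  have hQy : fderiv ℝ Q 0 (0, 1) = 0 := by
    have h := fderiv_reflect_even (hQc.differentiable (by norm_num)) hQsym ((0:ℝ), (1:ℝ))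
    have h2 : ((0:ℝ), -(1:ℝ)) = -((0:ℝ), (1:ℝ)) := by simp [Prod.ext_iff]
    rw [h2, map_neg] at h
    linarith
  have hdet' : 0 < -(fderiv ℝ P 0 (0, 1) * fderiv ℝ Q 0 (1, 0)) := by
    have h1 : fderiv ℝ P (0, 0) (1, 0) = fderiv ℝ P 0 (1, 0) := rfl
    have h2 : fderiv ℝ Q (0, 0) (0, 1) = fderiv ℝ Q 0 (0, 1) := rfl
    have h3 : fderiv ℝ P (0, 0) (0, 1) = fderiv ℝ P 0 (0, 1) := rfl
    have h4 : fderiv ℝ Q (0, 0) (1, 0) = fderiv ℝ Q 0 (1, 0) := rfl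
    rw [h1, h2, h3, h4] at hdet
    rw [hPx, hQy] at hdet
    linarith
  rcases lt_trichotomy (fderiv ℝ Q 0 (1, 0)) 0 with hbneg | hbzero | hbpos
  · -- apply key to the negated field
    set P' : ℝ × ℝ → ℝ := fun q => P (-q) with hP'def
    set Q' : ℝ × ℝ → ℝ := fun q => Q (-q) with hQ'def
    have hnegc : ContDiff ℝ 2 (fun q : ℝ × ℝ => -q) := contDiff_id.neg
    have hP'c : ContDiff ℝ 2 P' := hPc.comp hnegc
    have hQ'c : ContDiff ℝ 2 Q' := hQc.comp hnegc
    have hP'sym : ∀ x y : ℝ, P' (x, -y) = -P' (x, y) := by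
      intro x y
      show P (-(x, -y)) = -P (-(x, y))
      have e1 : -((x, -y) : ℝ × ℝ) = (-x, -(-y)) := rfl
      have e2 : -((x, y) : ℝ × ℝ) = (-x, -y) := rfl
      rw [e1, e2]
      exact hPsym (-x) (-y)
    have hQ'sym : ∀ x y : ℝ, Q' (x, -y) = Q' (x, y) := by
      intro x y
      show Q (-(x, -y)) = Q (-(x, y))
      have e1 : -((x, -y) : ℝ × ℝ) = (-x, -(-y)) := rfl
      have e2 : -((x, y) : ℝ × ℝ) = (-x, -y) := rfl
      rw [e1, e2]
      exact hQsym (-x) (-y)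
    have hP'0 : P' 0 = 0 := by show P (-0) = 0; rw [neg_zero]; exact hP0'
    have hQ'0 : Q' 0 = 0 := by show Q (-0) = 0; rw [neg_zero]; exact hQ0'
    have hP'd : ∀ w, fderiv ℝ P' 0 w = -(fderiv ℝ P 0 w) :=
      fderiv_comp_neg (hPc.differentiable (by norm_num))
    have hQ'd : ∀ w, fderiv ℝ Q' 0 w = -(fderiv ℝ Q 0 w) :=
      fderiv_comp_neg (hQc.differentiable (by norm_num))
    have ha' : fderiv ℝ P' 0 (0, 1) < 0 := by
      rw [hP'd]
      have : 0 < fderiv ℝ P 0 (0, 1) := by nlinarith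
      linarith
    have hb' : 0 < fderiv ℝ Q' 0 (1, 0) := by
      rw [hQ'd]
      linarith
    obtain ⟨U', hU', hU'key⟩ := key P' Q' hP'c hQ'c hP'sym hQ'sym hP'0 hQ'0 ha' hb'
    refine ⟨(fun q : ℝ × ℝ => -q) ⁻¹' U', ?_, ?_⟩
    · have hc : ContinuousAt (fun q : ℝ × ℝ => -q) ((0, 0) : ℝ × ℝ) :=
        continuous_neg.continuousAt
      apply hc.preimage_mem_nhds
      have : -((0, 0) : ℝ × ℝ) = ((0, 0) : ℝ × ℝ) := by simp
      rw [this]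
      exact hU'
    · intro p hp hpne
      have hpU' : -p ∈ U' := hp
      have hpne' : -p ≠ ((0, 0) : ℝ × ℝ) := by
        intro h
        apply hpne
        have : p = -(-p) := (neg_neg p).symm
        rw [this, h]
        simp
      obtain ⟨δ, hδ0, hδd, hδne, T, hT, hδper⟩ := hU'key (-p) hpU' hpne'
      refine ⟨fun t => -δ (-t), ?_, ?_, ?_, T, hT, ?_⟩
      · show -δ (-0) = p
        rw [neg_zero, hδ0, neg_neg]
      · intro t
        have h1 : HasDerivAt (fun t : ℝ => -t) (-1) t := (hasDerivAt_id t).neg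
        have h2 := (hδd (-t)).scomp t h1
        have h3 := h2.neg
        have h4 : -((-1 : ℝ) • (P' (δ (-t)), Q' (δ (-t)))) = (P' (δ (-t)), Q' (δ (-t))) := by
          rw [neg_one_smul, neg_neg]
        rw [h4] at h3
        exact h3
      · intro t h
        apply hδne (-t)
        have h' : -δ (-t) = ((0, 0) : ℝ × ℝ) := h
        have h2 : δ (-t) = -(-δ (-t)) := (neg_neg _).symm
        rw [h2, h']
        simp [Prod.ext_iff]
      · intro t
        show -δ (-(t + T)) = -δ (-t)
        have h1 := hδper (-t - T)
        have h2 : -t - T + T = -t := by ring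
        rw [h2] at h1
        have h3 : -(t + T) = -t - T := by ring
        rw [h3, h1]
  · exfalso
    rw [hbzero] at hdet'
    simp at hdet'
  · have ha : fderiv ℝ P 0 (0, 1) < 0 := by nlinarith
    exact key P Q hPc hQc hPsym hQsym hP0' hQ0' ha hbpos
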